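/- Let (V, g, J, ω) be a Hermitian vector space of complex dimension 3, let R̃ be a symmetric endomorphism of Λ²V* with spectrum in (5/6, 7/6) mapping (1,1)-forms to (1,1)-forms (in particular R̃(ω) is a real (1,1)-form), and let Φ ∈ Λ^{1,0}V* ⊗ ℂ^k be a vector of (1,0)-forms. Then the real 2-form R̃(ω) - iΦ*∧Φ is nondegenerate, where (Φ*∧Φ)(X,Y) = Φ(X)*Φ(Y) - Φ(Y)*Φ(X) is scalar-valued. -/

import Mathlib

open scoped RealInnerProductSpace ComplexConjugate

lemma sum_split_tri (n : ℕ) (f : Fin n → Fin n → ℝ) :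
    ∑ i, ∑ j, f i j =
      (∑ i, ∑ j, if i < j then f i j else 0) +
        ((∑ i, ∑ j, if i < j then f j i else 0) + ∑ i, f i i) := by
  have h2 : ∑ i, ∑ j, (if i < j then f j i else (0:ℝ)) =
      ∑ i, ∑ j, (if j < i then f i j else 0) := by
    rw [Finset.sum_comm]
  rw [h2]
  have key : ∀ i j : Fin n, f i j = (if i < j then f i j else 0) +
      ((if j < i then f i j else 0) + (if i = j then f i j else 0)) := by
    intro i j
    rcases lt_trichotomy i j with h | h | h
    · simp [h, h.ne, asymm h]
    · simp [h]
    · simp [h, h.ne', asymm h]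
  calc ∑ i, ∑ j, f i j
      = ∑ i, ∑ j, ((if i < j then f i j else 0) +
          ((if j < i then f i j else 0) + (if i = j then f i j else 0))) :=
        Finset.sum_congr rfl fun i _ => Finset.sum_congr rfl fun j _ => key i j
    _ = _ := by simp [Finset.sum_add_distrib, Finset.sum_ite_eq]

noncomputable def XiForm {V : Type*} [NormedAddCommGroup V] [InnerProductSpace ℝ V]
    (u v : V) : V →ₗ[ℝ] V →ₗ[ℝ] ℝ :=
  LinearMap.mk₂ ℝ (fun y z => ⟪u, y⟫ * ⟪v, z⟫ - ⟪u, z⟫ * ⟪v, y⟫)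
    (by intros; simp [inner_add_right]; ring)
    (by intros; simp [inner_smul_right]; ring)
    (by intros; simp [inner_add_right]; ring)
    (by intros; simp [inner_smul_right]; ring)

@[simp] lemma XiForm_apply {V : Type*} [NormedAddCommGroup V] [InnerProductSpace ℝ V]
    (u v y z : V) : XiForm u v y z = ⟪u, y⟫ * ⟪v, z⟫ - ⟪u, z⟫ * ⟪v, y⟫ := rfl

set_option maxHeartbeats 1000000 in
/-- on a Hermitian vector space of complex dimension 3, if `R̃` is a symmetric
endomorphism of `Λ²V*` with spectrum in `(5/6, 7/6)` preserving (1,1)-forms, and `Φ` is a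
vector of `(1,0)`-forms with values in `ℂ^k`, then the real 2-form `R̃(ω) - iΦ*∧Φ` is
nondegenerate, where `(Φ*∧Φ)(X,Y) = Φ(X)*Φ(Y) - Φ(Y)*Φ(X)`. -/
theorem curvature_plus_second_fundamental_form_nondegenerate {V : Type*}
    [NormedAddCommGroup V] [InnerProductSpace ℝ V] [FiniteDimensional ℝ V]
    (hdim : Module.finrank ℝ V = 6)
    (J : V →ₗ[ℝ] V) (hJ2 : ∀ x, J (J x) = -x) (hJo : ∀ x y, ⟪J x, J y⟫ = ⟪x, y⟫)
    (ωf : V →ₗ[ℝ] V →ₗ[ℝ] ℝ) (hωf : ∀ x y, ωf x y = ⟪J x, y⟫)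
    (b : OrthonormalBasis (Fin 6) ℝ V)
    (ip : (V →ₗ[ℝ] V →ₗ[ℝ] ℝ) → (V →ₗ[ℝ] V →ₗ[ℝ] ℝ) → ℝ)
    (hip : ∀ ζ η, ip ζ η = ∑ i, ∑ j, if i < j then ζ (b i) (b j) * η (b i) (b j) else 0)
    (Rt : (V →ₗ[ℝ] V →ₗ[ℝ] ℝ) →ₗ[ℝ] (V →ₗ[ℝ] V →ₗ[ℝ] ℝ))
    (hRalt : ∀ ζ, (∀ x y, ζ x y = - ζ y x) → ∀ x y, Rt ζ x y = - Rt ζ y x)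
    (hR11 : ∀ η, (∀ x y, η (J x) (J y) = η x y) → ∀ x y, Rt η (J x) (J y) = Rt η x y)
    (hRsym : ∀ ζ η, (∀ x y, ζ x y = - ζ y x) → (∀ x y, η x y = - η y x) →
      ip (Rt ζ) η = ip ζ (Rt η))
    (hspec : ∀ ζ, (∀ x y, ζ x y = - ζ y x) → ζ ≠ 0 →
      (5 / 6 : ℝ) * ip ζ ζ < ip (Rt ζ) ζ ∧ ip (Rt ζ) ζ < (7 / 6 : ℝ) * ip ζ ζ)
    (k : ℕ) (Φ : V →ₗ[ℝ] (Fin k → ℂ)) (hΦ : ∀ x, Φ (J x) = Complex.I • Φ x)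
    (ζf : V → V → ℝ)
    (hζf : ∀ x y, ζf x y = Rt ωf x y +
      (-Complex.I * ((∑ j, conj (Φ x j) * Φ y j) - ∑ j, conj (Φ y j) * Φ x j)).re) :
    ∀ x, (∀ y, ζf x y = 0) → x = 0 := by
  -- basic facts about J and ω
  have ωalt : ∀ y z, ωf y z = - ωf z y := by
    intro y z
    have h := hJo (J y) z
    rw [hJ2 y, inner_neg_left] at h
    rw [hωf, hωf, ← h, real_inner_comm]
  have orth : ∀ y : V, ⟪y, J y⟫ = 0 := by
    intro y
    have h := hJo y (J y)
    rw [hJ2 y, inner_neg_right] at h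
    have hcomm := real_inner_comm y (J y)
    linarith
  -- bilinearity and symmetry of ip
  have ipsymm : ∀ ζ η, ip ζ η = ip η ζ := by
    intro ζ η; rw [hip, hip]
    exact Finset.sum_congr rfl fun i _ => Finset.sum_congr rfl fun j _ => by
      split_ifs <;> ring
  have ipadd1 : ∀ ζ₁ ζ₂ η, ip (ζ₁ + ζ₂) η = ip ζ₁ η + ip ζ₂ η := by
    intro ζ₁ ζ₂ η
    simp only [hip, ← Finset.sum_add_distrib]
    exact Finset.sum_congr rfl fun i _ => Finset.sum_congr rfl fun j _ => by
      simp only [LinearMap.add_apply]; split_ifs <;> ring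
  have ipsub1 : ∀ ζ₁ ζ₂ η, ip (ζ₁ - ζ₂) η = ip ζ₁ η - ip ζ₂ η := by
    intro ζ₁ ζ₂ η
    simp only [hip, ← Finset.sum_sub_distrib]
    exact Finset.sum_congr rfl fun i _ => Finset.sum_congr rfl fun j _ => by
      simp only [LinearMap.sub_apply]; split_ifs <;> ring
  have ipsmul1 : ∀ (c : ℝ) ζ η, ip (c • ζ) η = c * ip ζ η := by
    intro c ζ η
    simp only [hip, Finset.mul_sum]
    exact Finset.sum_congr rfl fun i _ => Finset.sum_congr rfl fun j _ => by
      simp only [LinearMap.smul_apply, smul_eq_mul]; split_ifs <;> ring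
  have ipadd2 : ∀ ζ η₁ η₂, ip ζ (η₁ + η₂) = ip ζ η₁ + ip ζ η₂ := by
    intro ζ η₁ η₂; rw [ipsymm, ipadd1, ipsymm η₁, ipsymm η₂]
  have ipsub2 : ∀ ζ η₁ η₂, ip ζ (η₁ - η₂) = ip ζ η₁ - ip ζ η₂ := by
    intro ζ η₁ η₂; rw [ipsymm, ipsub1, ipsymm η₁, ipsymm η₂]
  have ipsmul2 : ∀ (c : ℝ) ζ η, ip ζ (c • η) = c * ip ζ η := by
    intro c ζ η; rw [ipsymm, ipsmul1, ipsymm]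
  -- pairing lemma
  have pairing : ∀ α : V →ₗ[ℝ] V →ₗ[ℝ] ℝ, (∀ y z, α y z = - α z y) → ∀ u v : V,
      ip α (XiForm u v) = α u v := by
    intro α halt u v
    have hdiag : ∀ w, α w w = 0 := by
      intro w; have := halt w w; linarith
    have expand : α u v = ∑ i, ∑ j, α (b i) (b j) * (⟪b i, u⟫ * ⟪b j, v⟫) := by
      conv_lhs => rw [← b.sum_repr' u, ← b.sum_repr' v]
      simp only [map_sum, LinearMap.sum_apply, map_smul, LinearMap.smul_apply, smul_eq_mul]
      rw [Finset.sum_comm]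
      refine Finset.sum_congr rfl fun i _ => ?_
      rw [Finset.mul_sum]
      exact Finset.sum_congr rfl fun j _ => by ring
    have key := sum_split_tri 6 (fun i j => α (b i) (b j) * (⟪b i, u⟫ * ⟪b j, v⟫))
    rw [hip]
    have lhs_eq : (∑ i, ∑ j, if i < j then α (b i) (b j) * XiForm u v (b i) (b j) else 0)
        = (∑ i, ∑ j, if i < j then α (b i) (b j) * (⟪b i, u⟫ * ⟪b j, v⟫) else 0)
          + (∑ i, ∑ j, if i < j then
              α (b j) (b i) * (⟪b j, u⟫ * ⟪b i, v⟫) else 0) := by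
      rw [← Finset.sum_add_distrib]
      refine Finset.sum_congr rfl fun i _ => ?_
      rw [← Finset.sum_add_distrib]
      refine Finset.sum_congr rfl fun j _ => ?_
      split_ifs with h
      · rw [XiForm_apply, halt (b j) (b i), real_inner_comm u (b i), real_inner_comm v (b j),
          real_inner_comm u (b j), real_inner_comm v (b i)]
        ring
      · simp
    rw [lhs_eq, expand, key]
    simp [hdiag]
  -- quadratic bound
  have qbound : ∀ ζ : V →ₗ[ℝ] V →ₗ[ℝ] ℝ, (∀ y z, ζ y z = - ζ z y) →
      |ip (Rt ζ) ζ - ip ζ ζ| ≤ (1/6 : ℝ) * ip ζ ζ := by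
    intro ζ halt
    by_cases h0 : ζ = 0
    · subst h0
      simp [hip]
    · obtain ⟨h1, h2⟩ := hspec ζ halt h0
      rw [abs_le]; constructor <;> linarith
  -- polarization bound
  have polar : ∀ ζ η : V →ₗ[ℝ] V →ₗ[ℝ] ℝ, (∀ y z, ζ y z = - ζ z y) →
      (∀ y z, η y z = - η z y) →
      |ip (Rt ζ) η - ip ζ η| ≤ (1/12 : ℝ) * (ip ζ ζ + ip η η) := by
    intro ζ η hζ hη
    have hsum : ∀ y z, (ζ + η) y z = - ((ζ + η) z y) := by
      intro y z; simp only [LinearMap.add_apply]; rw [hζ y z, hη y z]; ring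
    have hdiff : ∀ y z, (ζ - η) y z = - ((ζ - η) z y) := by
      intro y z; simp only [LinearMap.sub_apply]; rw [hζ y z, hη y z]; ring
    have e1 := qbound (ζ + η) hsum
    have e2 := qbound (ζ - η) hdiff
    have cross : ip (Rt η) ζ = ip (Rt ζ) η := by
      rw [hRsym η ζ hη hζ, ipsymm]
    have expA : ip (Rt (ζ + η)) (ζ + η) =
        ip (Rt ζ) ζ + 2 * ip (Rt ζ) η + ip (Rt η) η := by
      rw [map_add, ipadd1, ipadd2, ipadd2, cross]; ring
    have expB : ip (Rt (ζ - η)) (ζ - η) =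
        ip (Rt ζ) ζ - 2 * ip (Rt ζ) η + ip (Rt η) η := by
      rw [map_sub Rt ζ η, ipsub1, ipsub2, ipsub2, cross]; ring
    have expC : ip (ζ + η) (ζ + η) = ip ζ ζ + 2 * ip ζ η + ip η η := by
      rw [ipadd1, ipadd2, ipadd2, ipsymm η ζ]; ring
    have expD : ip (ζ - η) (ζ - η) = ip ζ ζ - 2 * ip ζ η + ip η η := by
      rw [ipsub1, ipsub2, ipsub2, ipsymm η ζ]; ring
    rw [expA, expC] at e1
    rw [expB, expD] at e2
    rw [abs_le] at e1 e2 ⊢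
    constructor <;> linarith [e1.1, e1.2, e2.1, e2.2]
  -- norm of ω
  have bON : ∀ i j : Fin 6, ⟪b i, b j⟫ = if i = j then (1:ℝ) else 0 := by
    intro i j; exact orthonormal_iff_ite.mp b.orthonormal i j
  have ipω : ip ωf ωf = 3 := by
    have hf : ∀ i, (∑ j, ωf (b i) (b j) * ωf (b i) (b j)) = 1 := by
      intro i
      have hs := b.sum_inner_mul_inner (J (b i)) (J (b i))
      rw [hJo] at hs
      calc ∑ j, ωf (b i) (b j) * ωf (b i) (b j)
          = ∑ j, ⟪J (b i), b j⟫ * ⟪b j, J (b i)⟫ := by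
            refine Finset.sum_congr rfl fun j _ => ?_
            rw [hωf, real_inner_comm (b j)]
        _ = ⟪b i, b i⟫ := hs
        _ = 1 := by rw [bON]; simp
    have key := sum_split_tri 6 (fun i j => ωf (b i) (b j) * ωf (b i) (b j))
    have htot : ∑ i, ∑ j, ωf (b i) (b j) * ωf (b i) (b j) = 6 := by
      simp [hf]
    have hsq : (∑ i, ∑ j, if i < j then ωf (b j) (b i) * ωf (b j) (b i) else (0:ℝ))
        = ∑ i, ∑ j, if i < j then ωf (b i) (b j) * ωf (b i) (b j) else 0 := by
      refine Finset.sum_congr rfl fun i _ => Finset.sum_congr rfl fun j _ => ?_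
      split_ifs
      · rw [ωalt (b j) (b i)]; ring
      · rfl
    have hd : ∀ i : Fin 6, ωf (b i) (b i) * ωf (b i) (b i) = 0 := by
      intro i
      have := ωalt (b i) (b i)
      have h0 : ωf (b i) (b i) = 0 := by linarith
      rw [h0]; ring
    rw [htot, hsq] at key
    simp only [hd, Finset.sum_const_zero, add_zero] at key
    rw [hip]
    linarith
  -- main argument
  intro x hx
  by_contra hx0
  set r : ℝ := ⟪x, x⟫ with hr
  have hrpos : 0 < r := by
    rw [hr, real_inner_self_eq_norm_sq]
    exact pow_pos (norm_pos_iff.mpr hx0) 2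
  -- the test form
  set ξ : V →ₗ[ℝ] V →ₗ[ℝ] ℝ := XiForm x (J x) with hξ
  have ξalt : ∀ y z, ξ y z = - ξ z y := by
    intro y z; simp only [hξ, XiForm_apply]; ring
  have ipξξ : ip ξ ξ = r ^ 2 := by
    rw [pairing ξ ξalt x (J x)]
    simp only [hξ, XiForm_apply]
    rw [hJo, orth]
    rw [hr]
    ring
  have ipωξ : ip ωf ξ = r := by
    rw [pairing ωf ωalt x (J x), hωf, hJo]
  have ipRωξ : ip (Rt ωf) ξ = Rt ωf x (J x) :=
    pairing (Rt ωf) (hRalt ωf ωalt) x (J x)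
  -- scaled polarization
  set t : ℝ := Real.sqrt (r / 2) with ht
  have htpos : 0 < t := Real.sqrt_pos.mpr (by linarith)
  have ht2 : t ^ 2 = r / 2 := Real.sq_sqrt (by linarith)
  have ωalt' : ∀ y z, (t • ωf) y z = - ((t • ωf) z y) := by
    intro y z; simp only [LinearMap.smul_apply, smul_eq_mul]; rw [ωalt y z]; ring
  have ξalt' : ∀ y z, (t⁻¹ • ξ) y z = - ((t⁻¹ • ξ) z y) := by
    intro y z; simp only [LinearMap.smul_apply, smul_eq_mul]; rw [ξalt y z]; ring
  have hpol := polar (t • ωf) (t⁻¹ • ξ) ωalt' ξalt'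
  rw [map_smul, ipsmul1, ipsmul2, ipsmul1, ipsmul2, ipsmul1, ipsmul2, ipsmul1, ipsmul2] at hpol
  have htne : t ≠ 0 := ne_of_gt htpos
  have hcancel : t * (t⁻¹ * ip (Rt ωf) ξ) - t * (t⁻¹ * ip ωf ξ)
      = ip (Rt ωf) ξ - ip ωf ξ := by
    field_simp
  rw [hcancel] at hpol
  have ht2' : t * (t * ip ωf ωf) = t ^ 2 * ip ωf ωf := by ring
  have hti2 : t⁻¹ * (t⁻¹ * ip ξ ξ) = (t ^ 2)⁻¹ * ip ξ ξ := by
    rw [sq, mul_inv]; ring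
  rw [ht2', hti2, ht2, ipω, ipξξ, ipRωξ, ipωξ] at hpol
  have hbound : |Rt ωf x (J x) - r| ≤ (7 / 24 : ℝ) * r := by
    have : (1/12 : ℝ) * (r / 2 * 3 + (r / 2)⁻¹ * r ^ 2) = (7/24) * r := by
      field_simp; ring
    linarith [hpol, this.le, this.ge]
  -- positivity of the curvature term
  have hRpos : (17 / 24 : ℝ) * r ≤ Rt ωf x (J x) := by
    rw [abs_le] at hbound; linarith [hbound.1]
  -- the Φ term
  have h1 : ∀ j, Φ (J x) j = Complex.I * Φ x j := by
    intro j; rw [hΦ]; simp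
  have e1 : ∑ j, conj (Φ x j) * Φ (J x) j
      = Complex.I * ∑ j, conj (Φ x j) * Φ x j := by
    rw [Finset.mul_sum]
    exact Finset.sum_congr rfl fun j _ => by rw [h1 j]; ring
  have e2 : ∑ j, conj (Φ (J x) j) * Φ x j
      = -Complex.I * ∑ j, conj (Φ x j) * Φ x j := by
    rw [Finset.mul_sum]
    refine Finset.sum_congr rfl fun j _ => ?_
    rw [h1 j, map_mul, Complex.conj_I]; ring
  set c : ℂ := ∑ j, conj (Φ x j) * Φ x j with hc
  have hcre : c = ((∑ j, Complex.normSq (Φ x j) : ℝ) : ℂ) := by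
    rw [hc]; push_cast
    exact Finset.sum_congr rfl fun j _ => Complex.normSq_eq_conj_mul_self.symm
  have hΦterm : (-Complex.I * ((∑ j, conj (Φ x j) * Φ (J x) j)
      - ∑ j, conj (Φ (J x) j) * Φ x j)).re = 2 * ∑ j, Complex.normSq (Φ x j) := by
    rw [e1, e2]
    have : -Complex.I * (Complex.I * c - -Complex.I * c) = 2 * c := by
      linear_combination (-2 * c) * Complex.I_sq
    rw [this, hcre]
    push_cast
    simp
  have hns : 0 ≤ ∑ j, Complex.normSq (Φ x j) :=
    Finset.sum_nonneg fun j _ => Complex.normSq_nonneg _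
  have hz := hx (J x)
  rw [hζf, hΦterm] at hz
  linarith
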